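/- Let A be a Hermitian n×n complex matrix, let B be any n×n complex matrix, and let t be a real number. Then ‖[exp(itA), B]‖ ≤ |t| · ‖[A, B]‖, where [X,Y] = XY − YX and the norm is the operator norm. -/

import Mathlib

open NormedSpace Complex

section Key
variable {E : Type*} [NormedRing E] [StarRing E] [CStarRing E] [NormedAlgebra ℂ E]
  [CompleteSpace E] [StarModule ℂ E]

lemma mem_unitary_exp (a : E) (ha : IsSelfAdjoint a) (s : ℝ) :
    NormedSpace.exp ((I * s) • a) ∈ unitary E := by
  let +nondep : NormedAlgebra ℚ E := .restrictScalars ℚ ℂ E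
  apply exp_mem_unitary_of_mem_skewAdjoint
  rw [skewAdjoint.mem_iff, star_smul, ha.star_eq]
  rw [star_mul', Complex.star_def, Complex.conj_I, Complex.conj_ofReal]
  module

omit [StarRing E] [CStarRing E] [StarModule ℂ E] in
lemma hasDerivAt_expIA (a : E) (f : ℝ → ℂ) (f' : ℂ) (s : ℝ) (hf : HasDerivAt f f' s) :
    HasDerivAt (fun u : ℝ => NormedSpace.exp (f u • a)) (f' • (NormedSpace.exp (f s • a) * a)) s := by
  have h := (hasDerivAt_exp_smul_const (𝕂 := ℂ) a (f s)).hasFDerivAt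
  have := (h.restrictScalars ℝ).comp_hasDerivAt s hf
  exact this

lemma key [Nontrivial E] (a b : E) (ha : IsSelfAdjoint a) (t : ℝ) :
    ‖NormedSpace.exp ((I * t) • a) * b - b * NormedSpace.exp ((I * t) • a)‖ ≤ |t| * ‖a * b - b * a‖ := by
  set C := ‖a * b - b * a‖ with hC
  set g : ℝ → E := fun s => NormedSpace.exp ((I * s) • a) * b * NormedSpace.exp ((I * ((t : ℂ) - s)) • a) with hg
  set g' : ℝ → E := fun s =>
    NormedSpace.exp ((I * s) • a) * (I • (a * b - b * a)) * NormedSpace.exp ((I * ((t : ℂ) - s)) • a) with hg'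
  have hcomm : ∀ z : ℂ, a * NormedSpace.exp (z • a) = NormedSpace.exp (z • a) * a := fun z =>
    (((Commute.refl a).smul_right z).exp_right).eq
  have hderiv : ∀ s : ℝ, HasDerivAt g (g' s) s := by
    intro s
    have hf1 : HasDerivAt (fun u : ℝ => I * (u : ℂ)) I s := by
      simpa using ((hasDerivAt_id s).ofReal_comp.const_mul I)
    have hf2 : HasDerivAt (fun u : ℝ => I * ((t : ℂ) - u)) (-I) s := by
      have : HasDerivAt (fun u : ℝ => ((t : ℂ) - u)) (-1) s := by
        simpa using ((hasDerivAt_id s).ofReal_comp.const_sub (t : ℂ))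
      simpa using this.const_mul I
    have h1 := hasDerivAt_expIA a _ I s hf1
    have h2 := hasDerivAt_expIA a _ (-I) s hf2
    rw [← hcomm] at h2
    have := (h1.mul (hasDerivAt_const s b)).mul h2
    convert this using 1
    · rfl
    rw [hg']
    simp only [mul_smul_comm, smul_mul_assoc, neg_smul, mul_neg, smul_sub, sub_mul,
      mul_sub, mul_zero, add_zero, mul_assoc, Pi.mul_apply]
    abel
  have hnorm : ∀ s : ℝ, ‖g' s‖ = C := by
    intro s
    rw [hg']
    beta_reduce
    rw [show ((t : ℂ) - s) = ((t - s : ℝ) : ℂ) by push_cast; ring]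
    rw [CStarRing.norm_mul_mem_unitary _ (mem_unitary_exp a ha (t - s)),
      CStarRing.norm_mem_unitary_mul _ (mem_unitary_exp a ha s), norm_smul]
    simp [hC]
  have := (convex_univ : Convex ℝ (Set.univ : Set ℝ)).norm_image_sub_le_of_norm_hasDerivWithin_le
    (fun x _ => (hderiv x).hasDerivWithinAt) (fun x _ => le_of_eq (hnorm x))
    (Set.mem_univ 0) (Set.mem_univ t)
  have hg0 : g 0 = b * NormedSpace.exp ((I * t) • a) := by simp [hg, NormedSpace.exp_zero]
  have hgt : g t = NormedSpace.exp ((I * t) • a) * b := by simp [hg, NormedSpace.exp_zero]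
  calc ‖NormedSpace.exp ((I * t) • a) * b - b * NormedSpace.exp ((I * t) • a)‖ = ‖g t - g 0‖ := by rw [hg0, hgt]
    _ ≤ C * ‖t - 0‖ := this
    _ = |t| * C := by rw [sub_zero, Real.norm_eq_abs, mul_comm]
end Key

open scoped Matrix
open scoped Matrix.Norms.L2Operator

/-- The `ℓ²` operator norm of a complex matrix, i.e. the norm of the associated
operator on Euclidean space. -/
noncomputable def opNorm {n : ℕ} (A : Matrix (Fin n) (Fin n) ℂ) : ℝ :=
  ‖Matrix.toEuclideanCLM (𝕜 := ℂ) A‖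

set_option maxHeartbeats 2000000 in
theorem stmt6 {n : ℕ} (A B : Matrix (Fin n) (Fin n) ℂ) (hA : A.IsHermitian) (t : ℝ) :
    opNorm (NormedSpace.exp ((Complex.I * t) • A) * B
        - B * NormedSpace.exp ((Complex.I * t) • A))
      ≤ |t| * opNorm (A * B - B * A) := by
  match n with
  | 0 =>
    have h1 : (NormedSpace.exp ((Complex.I * t) • A) * B
        - B * NormedSpace.exp ((Complex.I * t) • A)) = 0 := Subsingleton.elim _ _
    rw [h1, opNorm, map_zero, norm_zero]
    exact mul_nonneg (abs_nonneg t) (norm_nonneg _)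
  | (n + 1) =>
    set V := EuclideanSpace ℂ (Fin (n + 1))
    haveI : Nontrivial (V →L[ℂ] V) := by
      refine nontrivial_of_ne 0 1 fun h => ?_
      obtain ⟨v, hv⟩ := exists_ne (0 : V)
      exact hv (by simpa using (DFunLike.congr_fun h.symm v))
    set φ := Matrix.toEuclideanCLM (𝕜 := ℂ) (n := Fin (n + 1))
    have hcont : Continuous φ :=
      LinearMap.continuous_of_finiteDimensional
        ({ toFun := φ, map_add' := map_add φ, map_smul' := map_smul φ } :
          Matrix (Fin (n + 1)) (Fin (n + 1)) ℂ →ₗ[ℂ] (V →L[ℂ] V))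
    have hmap : φ (NormedSpace.exp ((Complex.I * t) • A)) =
        NormedSpace.exp ((Complex.I * t) • φ A) := by
      let +nondep : NormedAlgebra ℚ (Matrix (Fin (n + 1)) (Fin (n + 1)) ℂ) :=
        .restrictScalars ℚ ℂ _
      have h := map_exp φ.toRingEquiv hcont ((Complex.I * t) • A)
      have h2 : φ.toRingEquiv ((Complex.I * t) • A) = (Complex.I * t) • φ A :=
        map_smul φ _ _
      exact h.trans (congrArg _ h2)
    have ha : IsSelfAdjoint (φ A) := (show IsSelfAdjoint A from hA).map φ
    have := key (φ A) (φ B) ha t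
    rw [opNorm, opNorm, map_sub, map_mul, map_mul, map_sub, map_mul, map_mul, hmap]
    exact this
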